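/- With the hypotheses of the H(m,G,k) construction, H(m,G,k) is distance-balanced (|W_{uv}| = |W_{vu}| for every edge uv) if and only if t_1 = t_2 = n_1 − k = n_2 − m. -/

import Mathlib

open SimpleGraph

/-- `wSet G u v` is the set of vertices strictly closer to `u` than to `v`. -/
def wSet {V : Type*} (G : SimpleGraph V) (u v : V) : Set V :=
  {x | G.dist x u < G.dist x v}

/-- `G` is quasi-`lam`-distance-balanced. -/
def QuasiDB {V : Type*} (G : SimpleGraph V) (lam : ℚ) : Prop :=
  ∀ u v : V, G.Adj u v →
    ((wSet G u v).ncard : ℚ) = lam * ((wSet G v u).ncard : ℚ) ∨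
    ((wSet G v u).ncard : ℚ) = lam * ((wSet G u v).ncard : ℚ)

/-- The graph `H(m, G, k)`: to a bipartite graph `G` with parts `β`, `γ`, add an
independent set `A` of `m` new vertices joined to every vertex of the part `β`,
and an independent set `D` of `k` new vertices joined to every vertex of the
part `γ`. -/
def Hmgk {β γ : Type*} (G : SimpleGraph (β ⊕ γ)) (m k : ℕ) :
    SimpleGraph (Fin m ⊕ (β ⊕ γ) ⊕ Fin k) where
  Adj x y :=
    match x, y with
    | .inl _, .inr (.inl (.inl _)) => True
    | .inr (.inl (.inl _)), .inl _ => True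
    | .inr (.inl u), .inr (.inl v) => G.Adj u v
    | .inr (.inr _), .inr (.inl (.inr _)) => True
    | .inr (.inl (.inr _)), .inr (.inr _) => True
    | _, _ => False
  symm := by
    constructor
    rintro (a | ((b | c) | d)) (a2 | ((b2 | c2) | d2)) h <;>
      simp_all [SimpleGraph.adj_comm]
  loopless := by
    constructor
    rintro (a | ((b | c) | d)) h <;> simp_all

/-- `G'` is distance-balanced: `|W_{uv}| = |W_{vu}|` for every edge `uv`. -/
def DistBalanced {V : Type*} (G : SimpleGraph V) : Prop :=
  ∀ u v : V, G.Adj u v → (wSet G u v).ncard = (wSet G v u).ncard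

section Stmt14Aux

variable {β γ : Type*} [Fintype β] [Fintype γ] {m k : ℕ} {G : SimpleGraph (β ⊕ γ)}

private abbrev vA (i : Fin m) : Fin m ⊕ (β ⊕ γ) ⊕ Fin k := .inl i
private abbrev vB (b : β) : Fin m ⊕ (β ⊕ γ) ⊕ Fin k := .inr (.inl (.inl b))
private abbrev vC (c : γ) : Fin m ⊕ (β ⊕ γ) ⊕ Fin k := .inr (.inl (.inr c))
private abbrev vD (j : Fin k) : Fin m ⊕ (β ⊕ γ) ⊕ Fin k := .inr (.inr j)

private def fIdx : (Fin m ⊕ (β ⊕ γ) ⊕ Fin k) → ℤ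
  | .inl _ => 0
  | .inr (.inl (.inl _)) => 1
  | .inr (.inl (.inr _)) => 2
  | .inr (.inr _) => 3

private lemma adj_fIdx (hbipB : ∀ b b' : β, ¬ G.Adj (.inl b) (.inl b'))
    (hbipC : ∀ c c' : γ, ¬ G.Adj (.inr c) (.inr c'))
    {x y : Fin m ⊕ (β ⊕ γ) ⊕ Fin k} (h : (Hmgk G m k).Adj x y) :
    fIdx x = fIdx y + 1 ∨ fIdx y = fIdx x + 1 := by
  rcases x with i | ((b | c) | j) <;> rcases y with i' | ((b' | c') | j') <;>
    first
      | exact Or.inr rfl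
      | exact Or.inl rfl
      | exact (h : False).elim
      | exact absurd (h : G.Adj _ _) (hbipB _ _)
      | exact absurd (h : G.Adj _ _) (hbipC _ _)

private lemma walk_len (hbipB : ∀ b b' : β, ¬ G.Adj (.inl b) (.inl b'))
    (hbipC : ∀ c c' : γ, ¬ G.Adj (.inr c) (.inr c'))
    {x y : Fin m ⊕ (β ⊕ γ) ⊕ Fin k} (p : (Hmgk G m k).Walk x y) :
    |fIdx x - fIdx y| ≤ (p.length : ℤ) ∧ (2 : ℤ) ∣ ((p.length : ℤ) - |fIdx x - fIdx y|) := by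
  induction p with
  | nil => simp
  | @cons u v w h q ih =>
      obtain ⟨l1, l2⟩ := ih
      simp only [SimpleGraph.Walk.length_cons]
      rcases adj_fIdx hbipB hbipC h with h1 | h1 <;>
        rcases abs_cases (fIdx v - fIdx w) with ⟨e1, e2⟩ | ⟨e1, e2⟩ <;>
          rcases abs_cases (fIdx u - fIdx w) with ⟨e3, e4⟩ | ⟨e3, e4⟩ <;>
            rw [e1] at l1 l2 <;> rw [e3] <;> push_cast <;> omega

private lemma dist_facts (hbipB : ∀ b b' : β, ¬ G.Adj (.inl b) (.inl b'))
    (hbipC : ∀ c c' : γ, ¬ G.Adj (.inr c) (.inr c'))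
    {x y : Fin m ⊕ (β ⊕ γ) ⊕ Fin k} (p : (Hmgk G m k).Walk x y) :
    (Hmgk G m k).dist x y ≤ p.length ∧
      |fIdx x - fIdx y| ≤ ((Hmgk G m k).dist x y : ℤ) ∧
      (2 : ℤ) ∣ (((Hmgk G m k).dist x y : ℤ) - |fIdx x - fIdx y|) := by
  refine ⟨SimpleGraph.dist_le p, ?_⟩
  obtain ⟨q, hq⟩ := p.reachable.exists_walk_length_eq_dist
  have := walk_len hbipB hbipC q
  rw [hq] at this
  exact this

section Dist

variable (hbipB : ∀ b b' : β, ¬ G.Adj (.inl b) (.inl b'))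
variable (hbipC : ∀ c c' : γ, ¬ G.Adj (.inr c) (.inr c'))

private lemma dAB (i : Fin m) (b : β) : (Hmgk G m k).dist (vA i) (vB b) = 1 :=
  SimpleGraph.dist_eq_one_iff_adj.2 trivial

private lemma dCD (c : γ) (j : Fin k) : (Hmgk G m k).dist (vC c) (vD j) = 1 :=
  SimpleGraph.dist_eq_one_iff_adj.2 trivial

private lemma dBCadj {b : β} {c : γ} (h : G.Adj (.inl b) (.inr c)) :
    (Hmgk G m k).dist (vB b) (vC c) = 1 :=
  SimpleGraph.dist_eq_one_iff_adj.2 h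

include hbipB hbipC

private lemma dAA (b₀ : β) {i i' : Fin m} (hne : i ≠ i') :
    (Hmgk G m k).dist (vA i) (vA i') = 2 := by
  obtain ⟨h1, h2, h3⟩ := dist_facts hbipB hbipC
    (SimpleGraph.Walk.cons (show (Hmgk G m k).Adj (vA i) (vB b₀) from trivial)
      (SimpleGraph.Walk.cons (show (Hmgk G m k).Adj (vB b₀) (vA i') from trivial)
        SimpleGraph.Walk.nil))
  have h0 : 0 < (Hmgk G m k).dist (vA i) (vA i') :=
    (SimpleGraph.Walk.reachable
      (SimpleGraph.Walk.cons (show (Hmgk G m k).Adj (vA i) (vB b₀) from trivial)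
        (SimpleGraph.Walk.cons (show (Hmgk G m k).Adj (vB b₀) (vA i') from trivial)
          SimpleGraph.Walk.nil))).pos_dist_of_ne (by simp [hne])
  simp only [fIdx] at h2 h3
  norm_num at h2 h3
  simp only [SimpleGraph.Walk.length_cons, SimpleGraph.Walk.length_nil] at h1
  omega

private lemma dAC (hc : ∀ c : γ, ∃ b, G.Adj (.inl b) (.inr c)) (i : Fin m) (c : γ) :
    (Hmgk G m k).dist (vA i) (vC c) = 2 := by
  obtain ⟨b, hbc⟩ := hc c
  obtain ⟨h1, h2, h3⟩ := dist_facts hbipB hbipC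
    (SimpleGraph.Walk.cons (show (Hmgk G m k).Adj (vA i) (vB b) from trivial)
      (SimpleGraph.Walk.cons (show (Hmgk G m k).Adj (vB b) (vC c) from hbc)
        SimpleGraph.Walk.nil))
  simp only [fIdx] at h2 h3
  norm_num at h2 h3
  simp only [SimpleGraph.Walk.length_cons, SimpleGraph.Walk.length_nil] at h1
  omega

private lemma dAD {b₀ : β} {c₀ : γ} (hbc₀ : G.Adj (.inl b₀) (.inr c₀))
    (i : Fin m) (j : Fin k) :
    (Hmgk G m k).dist (vA i) (vD j) = 3 := by
  obtain ⟨h1, h2, h3⟩ := dist_facts hbipB hbipC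
    (SimpleGraph.Walk.cons (show (Hmgk G m k).Adj (vA i) (vB b₀) from trivial)
      (SimpleGraph.Walk.cons (show (Hmgk G m k).Adj (vB b₀) (vC c₀) from hbc₀)
        (SimpleGraph.Walk.cons (show (Hmgk G m k).Adj (vC c₀) (vD j) from trivial)
          SimpleGraph.Walk.nil)))
  simp only [fIdx] at h2 h3
  norm_num at h2 h3
  simp only [SimpleGraph.Walk.length_cons, SimpleGraph.Walk.length_nil] at h1
  omega

private lemma dBB (i₀ : Fin m) {b b' : β} (hne : b ≠ b') :
    (Hmgk G m k).dist (vB b) (vB b') = 2 := by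
  obtain ⟨h1, h2, h3⟩ := dist_facts hbipB hbipC
    (SimpleGraph.Walk.cons (show (Hmgk G m k).Adj (vB b) (vA i₀) from trivial)
      (SimpleGraph.Walk.cons (show (Hmgk G m k).Adj (vA i₀) (vB b') from trivial)
        SimpleGraph.Walk.nil))
  have h0 : 0 < (Hmgk G m k).dist (vB b) (vB b') :=
    (SimpleGraph.Walk.reachable
      (SimpleGraph.Walk.cons (show (Hmgk G m k).Adj (vB b) (vA i₀) from trivial)
        (SimpleGraph.Walk.cons (show (Hmgk G m k).Adj (vA i₀) (vB b') from trivial)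
          SimpleGraph.Walk.nil))).pos_dist_of_ne (by simp [hne])
  simp only [fIdx] at h2 h3
  norm_num at h2 h3
  simp only [SimpleGraph.Walk.length_cons, SimpleGraph.Walk.length_nil] at h1
  omega

private lemma dBCnon (i₀ : Fin m) (hc : ∀ c : γ, ∃ b, G.Adj (.inl b) (.inr c))
    {b : β} {c : γ} (hnadj : ¬ G.Adj (.inl b) (.inr c)) :
    (Hmgk G m k).dist (vB b) (vC c) = 3 := by
  obtain ⟨b', hb'c⟩ := hc c
  obtain ⟨h1, h2, h3⟩ := dist_facts hbipB hbipC
    (SimpleGraph.Walk.cons (show (Hmgk G m k).Adj (vB b) (vA i₀) from trivial)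
      (SimpleGraph.Walk.cons (show (Hmgk G m k).Adj (vA i₀) (vB b') from trivial)
        (SimpleGraph.Walk.cons (show (Hmgk G m k).Adj (vB b') (vC c) from hb'c)
          SimpleGraph.Walk.nil)))
  have hne1 : (Hmgk G m k).dist (vB b) (vC c) ≠ 1 := by
    intro h
    exact hnadj ((SimpleGraph.dist_eq_one_iff_adj (G := Hmgk G m k)).1 h)
  simp only [fIdx] at h2 h3
  norm_num at h2 h3
  simp only [SimpleGraph.Walk.length_cons, SimpleGraph.Walk.length_nil] at h1
  omega

private lemma dBD (hb : ∀ b : β, ∃ c, G.Adj (.inl b) (.inr c)) (b : β) (j : Fin k) :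
    (Hmgk G m k).dist (vB b) (vD j) = 2 := by
  obtain ⟨c, hbc⟩ := hb b
  obtain ⟨h1, h2, h3⟩ := dist_facts hbipB hbipC
    (SimpleGraph.Walk.cons (show (Hmgk G m k).Adj (vB b) (vC c) from hbc)
      (SimpleGraph.Walk.cons (show (Hmgk G m k).Adj (vC c) (vD j) from trivial)
        SimpleGraph.Walk.nil))
  simp only [fIdx] at h2 h3
  norm_num at h2 h3
  simp only [SimpleGraph.Walk.length_cons, SimpleGraph.Walk.length_nil] at h1
  omega

private lemma dCC (j₀ : Fin k) {c c' : γ} (hne : c ≠ c') :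
    (Hmgk G m k).dist (vC c) (vC c') = 2 := by
  obtain ⟨h1, h2, h3⟩ := dist_facts hbipB hbipC
    (SimpleGraph.Walk.cons (show (Hmgk G m k).Adj (vC c) (vD j₀) from trivial)
      (SimpleGraph.Walk.cons (show (Hmgk G m k).Adj (vD j₀) (vC c') from trivial)
        SimpleGraph.Walk.nil))
  have h0 : 0 < (Hmgk G m k).dist (vC c) (vC c') :=
    (SimpleGraph.Walk.reachable
      (SimpleGraph.Walk.cons (show (Hmgk G m k).Adj (vC c) (vD j₀) from trivial)
        (SimpleGraph.Walk.cons (show (Hmgk G m k).Adj (vD j₀) (vC c') from trivial)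
          SimpleGraph.Walk.nil))).pos_dist_of_ne (by simp [hne])
  simp only [fIdx] at h2 h3
  norm_num at h2 h3
  simp only [SimpleGraph.Walk.length_cons, SimpleGraph.Walk.length_nil] at h1
  omega

private lemma dDD (c₀ : γ) {j j' : Fin k} (hne : j ≠ j') :
    (Hmgk G m k).dist (vD j) (vD j') = 2 := by
  obtain ⟨h1, h2, h3⟩ := dist_facts hbipB hbipC
    (SimpleGraph.Walk.cons (show (Hmgk G m k).Adj (vD j) (vC c₀) from trivial)
      (SimpleGraph.Walk.cons (show (Hmgk G m k).Adj (vC c₀) (vD j') from trivial)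
        SimpleGraph.Walk.nil))
  have h0 : 0 < (Hmgk G m k).dist (vD j) (vD j') :=
    (SimpleGraph.Walk.reachable
      (SimpleGraph.Walk.cons (show (Hmgk G m k).Adj (vD j) (vC c₀) from trivial)
        (SimpleGraph.Walk.cons (show (Hmgk G m k).Adj (vC c₀) (vD j') from trivial)
          SimpleGraph.Walk.nil))).pos_dist_of_ne (by simp [hne])
  simp only [fIdx] at h2 h3
  norm_num at h2 h3
  simp only [SimpleGraph.Walk.length_cons, SimpleGraph.Walk.length_nil] at h1
  omega

end Dist

/-- splitting the cardinality of a subset of a sum type -/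
private lemma ncard_sum_split {α α' : Type*} [Finite α] [Finite α'] (T : Set (α ⊕ α')) :
    T.ncard = {a | .inl a ∈ T}.ncard + {a' | .inr a' ∈ T}.ncard := by
  have hT : T = Sum.inl '' {a | .inl a ∈ T} ∪ Sum.inr '' {a' | .inr a' ∈ T} :=
    Set.ext fun x => by rcases x with a | a' <;> simp
  have hdisj : Disjoint (Sum.inl '' {a | .inl a ∈ T} : Set (α ⊕ α'))
      (Sum.inr '' {a' | .inr a' ∈ T}) := by
    rw [Set.disjoint_left]
    rintro x hx hx'
    obtain ⟨a, -, rfl⟩ := hx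
    obtain ⟨a', -, h⟩ := hx'
    cases h
  conv_lhs => rw [hT]
  rw [Set.ncard_union_eq hdisj (Set.toFinite _) (Set.toFinite _),
    Set.ncard_image_of_injective _ Sum.inl_injective,
    Set.ncard_image_of_injective _ Sum.inr_injective]

private lemma ncard_V (S : Set (Fin m ⊕ (β ⊕ γ) ⊕ Fin k)) :
    S.ncard = {i : Fin m | vA i ∈ S}.ncard + {b : β | vB b ∈ S}.ncard
      + {c : γ | vC c ∈ S}.ncard + {j : Fin k | vD j ∈ S}.ncard := by
  rw [ncard_sum_split S, ncard_sum_split {x | .inr x ∈ S},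
    ncard_sum_split {x : β ⊕ γ | .inl x ∈ {x | .inr x ∈ S}}]
  simp only [Set.mem_setOf_eq]
  ring

private lemma ncard_compl {α : Type*} [Fintype α] (s : Set α) :
    sᶜ.ncard = Fintype.card α - s.ncard := by
  have h := Set.ncard_add_ncard_compl s
  simp only [Set.ncard_univ, Nat.card_eq_fintype_card] at h
  omega

private lemma ncard_univ' {α : Type*} [Fintype α] :
    (Set.univ : Set α).ncard = Fintype.card α := by
  rw [Set.ncard_univ, Nat.card_eq_fintype_card]

section Counts

variable (hbipB : ∀ b b' : β, ¬ G.Adj (.inl b) (.inl b'))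
variable (hbipC : ∀ c c' : γ, ¬ G.Adj (.inr c) (.inr c'))
variable (hb : ∀ b : β, ∃ c, G.Adj (.inl b) (.inr c))
variable (hc : ∀ c : γ, ∃ b, G.Adj (.inl b) (.inr c))
variable {b₀ : β} {c₀ : γ}

include hbipB hbipC hb hc

private lemma card_Wab (hbc₀ : G.Adj (.inl b₀) (.inr c₀)) (i : Fin m) (b : β) :
    (wSet (Hmgk G m k) (vA i) (vB b)).ncard
      = 1 + (Fintype.card β - 1) + (Fintype.card γ - {c : γ | G.Adj (.inl b) (.inr c)}.ncard) := by
  rw [ncard_V]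
  have eA : {i' : Fin m | vA i' ∈ wSet (Hmgk G m k) (vA i) (vB b)} = {i} := by
    ext i'
    simp only [wSet, Set.mem_setOf_eq, Set.mem_singleton_iff]
    rcases eq_or_ne i' i with rfl | hne
    · simp [SimpleGraph.dist_self, dAB]
    · rw [dAA hbipB hbipC b₀ hne, dAB]
      simp [hne]
  have eB : {b' : β | vB b' ∈ wSet (Hmgk G m k) (vA i) (vB b)} = {b}ᶜ := by
    ext b'
    simp only [wSet, Set.mem_setOf_eq, Set.mem_compl_iff, Set.mem_singleton_iff]
    rcases eq_or_ne b' b with rfl | hne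
    · simp [SimpleGraph.dist_self]
    · rw [SimpleGraph.dist_comm (u := vB b') (v := vA i), dAB, dBB hbipB hbipC i hne]
      simp [hne]
  have eC : {c' : γ | vC c' ∈ wSet (Hmgk G m k) (vA i) (vB b)}
      = {c : γ | G.Adj (.inl b) (.inr c)}ᶜ := by
    ext c'
    simp only [wSet, Set.mem_setOf_eq, Set.mem_compl_iff]
    rw [SimpleGraph.dist_comm (u := vC c') (v := vA i), dAC hbipB hbipC hc,
      SimpleGraph.dist_comm (u := vC c') (v := vB b)]
    by_cases hadj : G.Adj (.inl b) (.inr c')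
    · rw [dBCadj hadj]; simp [hadj]
    · rw [dBCnon hbipB hbipC i hc hadj]; simp [hadj]
  have eD : {j' : Fin k | vD j' ∈ wSet (Hmgk G m k) (vA i) (vB b)} = ∅ := by
    ext j'
    simp only [wSet, Set.mem_setOf_eq, Set.mem_empty_iff_false, iff_false, not_lt]
    rw [SimpleGraph.dist_comm (u := vD j') (v := vA i), dAD hbipB hbipC hbc₀,
      SimpleGraph.dist_comm (u := vD j') (v := vB b), dBD hbipB hbipC hb]
    omega
  rw [eA, eB, eC, eD, Set.ncard_singleton, ncard_compl, ncard_compl, Set.ncard_singleton,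
    Set.ncard_empty]
  omega

private lemma card_Wba (hbc₀ : G.Adj (.inl b₀) (.inr c₀)) (i : Fin m) (b : β) :
    (wSet (Hmgk G m k) (vB b) (vA i)).ncard
      = (m - 1) + 1 + {c : γ | G.Adj (.inl b) (.inr c)}.ncard + k := by
  rw [ncard_V]
  have eA : {i' : Fin m | vA i' ∈ wSet (Hmgk G m k) (vB b) (vA i)} = {i}ᶜ := by
    ext i'
    simp only [wSet, Set.mem_setOf_eq, Set.mem_compl_iff, Set.mem_singleton_iff]
    rcases eq_or_ne i' i with rfl | hne
    · simp [SimpleGraph.dist_self]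
    · rw [dAA hbipB hbipC b₀ hne, dAB]
      simp [hne]
  have eB : {b' : β | vB b' ∈ wSet (Hmgk G m k) (vB b) (vA i)} = {b} := by
    ext b'
    simp only [wSet, Set.mem_setOf_eq, Set.mem_singleton_iff]
    rcases eq_or_ne b' b with rfl | hne
    · simp [SimpleGraph.dist_self, SimpleGraph.dist_comm (u := vB b') (v := vA i), dAB]
    · rw [SimpleGraph.dist_comm (u := vB b') (v := vA i), dAB, dBB hbipB hbipC i hne]
      simp [hne]
  have eC : {c' : γ | vC c' ∈ wSet (Hmgk G m k) (vB b) (vA i)}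
      = {c : γ | G.Adj (.inl b) (.inr c)} := by
    ext c'
    simp only [wSet, Set.mem_setOf_eq]
    rw [SimpleGraph.dist_comm (u := vC c') (v := vA i), dAC hbipB hbipC hc,
      SimpleGraph.dist_comm (u := vC c') (v := vB b)]
    by_cases hadj : G.Adj (.inl b) (.inr c')
    · rw [dBCadj hadj]; simp [hadj]
    · rw [dBCnon hbipB hbipC i hc hadj]; simp [hadj]
  have eD : {j' : Fin k | vD j' ∈ wSet (Hmgk G m k) (vB b) (vA i)} = Set.univ := by
    ext j'
    simp only [wSet, Set.mem_setOf_eq, Set.mem_univ, iff_true]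
    rw [SimpleGraph.dist_comm (u := vD j') (v := vA i), dAD hbipB hbipC hbc₀,
      SimpleGraph.dist_comm (u := vD j') (v := vB b), dBD hbipB hbipC hb]
    omega
  rw [eA, eB, eC, eD, Set.ncard_singleton, ncard_compl, Set.ncard_singleton, ncard_univ',
    Fintype.card_fin, Fintype.card_fin]

private lemma card_Wbc (i₀ : Fin m) (j₀ : Fin k) {b : β} {c : γ}
    (hadj : G.Adj (.inl b) (.inr c)) :
    (wSet (Hmgk G m k) (vB b) (vC c)).ncard
      = m + (1 + (Fintype.card β - {b' : β | G.Adj (.inl b') (.inr c)}.ncard))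
        + ({c' : γ | G.Adj (.inl b) (.inr c')}.ncard - 1) := by
  rw [ncard_V]
  have eA : {i' : Fin m | vA i' ∈ wSet (Hmgk G m k) (vB b) (vC c)} = Set.univ := by
    ext i'
    simp only [wSet, Set.mem_setOf_eq, Set.mem_univ, iff_true]
    rw [dAB, dAC hbipB hbipC hc]
    omega
  have eB : {b' : β | vB b' ∈ wSet (Hmgk G m k) (vB b) (vC c)}
      = insert b {b' : β | ¬ G.Adj (.inl b') (.inr c)} := by
    ext b'
    simp only [wSet, Set.mem_setOf_eq, Set.mem_insert_iff]
    rcases eq_or_ne b' b with rfl | hne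
    · simp [SimpleGraph.dist_self, dBCadj hadj]
    · rw [dBB hbipB hbipC i₀ hne]
      by_cases hadj' : G.Adj (.inl b') (.inr c)
      · rw [dBCadj hadj']; simp [hne, hadj']
      · rw [dBCnon hbipB hbipC i₀ hc hadj']; simp [hne, hadj']
  have eC : {c' : γ | vC c' ∈ wSet (Hmgk G m k) (vB b) (vC c)}
      = {c' : γ | G.Adj (.inl b) (.inr c')} \ {c} := by
    ext c'
    simp only [wSet, Set.mem_setOf_eq, Set.mem_diff, Set.mem_singleton_iff]
    rcases eq_or_ne c' c with rfl | hne
    · rw [SimpleGraph.dist_self, SimpleGraph.dist_comm (u := vC c') (v := vB b),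
        dBCadj hadj]
      simp
    · rw [dCC hbipB hbipC j₀ hne, SimpleGraph.dist_comm (u := vC c') (v := vB b)]
      by_cases hadj' : G.Adj (.inl b) (.inr c')
      · rw [dBCadj hadj']; simp [hne, hadj']
      · rw [dBCnon hbipB hbipC i₀ hc hadj']; simp [hne, hadj']
  have eD : {j' : Fin k | vD j' ∈ wSet (Hmgk G m k) (vB b) (vC c)} = ∅ := by
    ext j'
    simp only [wSet, Set.mem_setOf_eq, Set.mem_empty_iff_false, iff_false, not_lt]
    rw [SimpleGraph.dist_comm (u := vD j') (v := vB b), dBD hbipB hbipC hb,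
      SimpleGraph.dist_comm (u := vD j') (v := vC c), dCD]
    omega
  have hbmem : b ∉ {b' : β | ¬ G.Adj (.inl b') (.inr c)} := by simp [hadj]
  have hcmem : c ∈ {c' : γ | G.Adj (.inl b) (.inr c')} := hadj
  rw [eA, eB, eC, eD, ncard_univ', Fintype.card_fin,
    Set.ncard_insert_of_notMem hbmem (Set.toFinite _),
    Set.ncard_diff_singleton_of_mem hcmem, Set.ncard_empty]
  have : {b' : β | ¬ G.Adj (.inl b') (.inr c)}
      = {b' : β | G.Adj (.inl b') (.inr c)}ᶜ := rfl
  rw [this, ncard_compl]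
  omega

private lemma card_Wcb (i₀ : Fin m) (j₀ : Fin k) {b : β} {c : γ}
    (hadj : G.Adj (.inl b) (.inr c)) :
    (wSet (Hmgk G m k) (vC c) (vB b)).ncard
      = ({b' : β | G.Adj (.inl b') (.inr c)}.ncard - 1)
        + (1 + (Fintype.card γ - {c' : γ | G.Adj (.inl b) (.inr c')}.ncard)) + k := by
  rw [ncard_V]
  have eA : {i' : Fin m | vA i' ∈ wSet (Hmgk G m k) (vC c) (vB b)} = ∅ := by
    ext i'
    simp only [wSet, Set.mem_setOf_eq, Set.mem_empty_iff_false, iff_false, not_lt]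
    rw [dAB, dAC hbipB hbipC hc]
    omega
  have eB : {b' : β | vB b' ∈ wSet (Hmgk G m k) (vC c) (vB b)}
      = {b' : β | G.Adj (.inl b') (.inr c)} \ {b} := by
    ext b'
    simp only [wSet, Set.mem_setOf_eq, Set.mem_diff, Set.mem_singleton_iff]
    rcases eq_or_ne b' b with rfl | hne
    · rw [SimpleGraph.dist_self, dBCadj hadj]
      simp
    · rw [dBB hbipB hbipC i₀ hne]
      by_cases hadj' : G.Adj (.inl b') (.inr c)
      · rw [dBCadj hadj']; simp [hne, hadj']
      · rw [dBCnon hbipB hbipC i₀ hc hadj']; simp [hne, hadj']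
  have eC : {c' : γ | vC c' ∈ wSet (Hmgk G m k) (vC c) (vB b)}
      = insert c {c' : γ | ¬ G.Adj (.inl b) (.inr c')} := by
    ext c'
    simp only [wSet, Set.mem_setOf_eq, Set.mem_insert_iff]
    rcases eq_or_ne c' c with rfl | hne
    · rw [SimpleGraph.dist_self, SimpleGraph.dist_comm (u := vC c') (v := vB b),
        dBCadj hadj]
      simp
    · rw [dCC hbipB hbipC j₀ hne, SimpleGraph.dist_comm (u := vC c') (v := vB b)]
      by_cases hadj' : G.Adj (.inl b) (.inr c')
      · rw [dBCadj hadj']; simp [hne, hadj']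
      · rw [dBCnon hbipB hbipC i₀ hc hadj']; simp [hne, hadj']
  have eD : {j' : Fin k | vD j' ∈ wSet (Hmgk G m k) (vC c) (vB b)} = Set.univ := by
    ext j'
    simp only [wSet, Set.mem_setOf_eq, Set.mem_univ, iff_true]
    rw [SimpleGraph.dist_comm (u := vD j') (v := vB b), dBD hbipB hbipC hb,
      SimpleGraph.dist_comm (u := vD j') (v := vC c), dCD]
    omega
  have hbmem : b ∈ {b' : β | G.Adj (.inl b') (.inr c)} := hadj
  have hcmem : c ∉ {c' : γ | ¬ G.Adj (.inl b) (.inr c')} := by simp [hadj]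
  rw [eA, eB, eC, eD, ncard_univ', Fintype.card_fin,
    Set.ncard_insert_of_notMem hcmem (Set.toFinite _),
    Set.ncard_diff_singleton_of_mem hbmem, Set.ncard_empty]
  have : {c' : γ | ¬ G.Adj (.inl b) (.inr c')}
      = {c' : γ | G.Adj (.inl b) (.inr c')}ᶜ := rfl
  rw [this, ncard_compl]
  omega

private lemma card_Wcd (i₀ : Fin m) (hbc₀ : G.Adj (.inl b₀) (.inr c₀)) (c : γ) (j : Fin k) :
    (wSet (Hmgk G m k) (vC c) (vD j)).ncard
      = m + {b' : β | G.Adj (.inl b') (.inr c)}.ncard + 1 + (k - 1) := by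
  rw [ncard_V]
  have eA : {i' : Fin m | vA i' ∈ wSet (Hmgk G m k) (vC c) (vD j)} = Set.univ := by
    ext i'
    simp only [wSet, Set.mem_setOf_eq, Set.mem_univ, iff_true]
    rw [dAC hbipB hbipC hc, dAD hbipB hbipC hbc₀]
    omega
  have eB : {b' : β | vB b' ∈ wSet (Hmgk G m k) (vC c) (vD j)}
      = {b' : β | G.Adj (.inl b') (.inr c)} := by
    ext b'
    simp only [wSet, Set.mem_setOf_eq]
    rw [dBD hbipB hbipC hb]
    by_cases hadj' : G.Adj (.inl b') (.inr c)
    · rw [dBCadj hadj']; simp [hadj']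
    · rw [dBCnon hbipB hbipC i₀ hc hadj']; simp [hadj']
  have eC : {c' : γ | vC c' ∈ wSet (Hmgk G m k) (vC c) (vD j)} = {c} := by
    ext c'
    simp only [wSet, Set.mem_setOf_eq, Set.mem_singleton_iff]
    rcases eq_or_ne c' c with rfl | hne
    · simp [SimpleGraph.dist_self, dCD]
    · rw [dCC hbipB hbipC j hne, dCD]
      simp [hne]
  have eD : {j' : Fin k | vD j' ∈ wSet (Hmgk G m k) (vC c) (vD j)} = {j}ᶜ := by
    ext j'
    simp only [wSet, Set.mem_setOf_eq, Set.mem_compl_iff, Set.mem_singleton_iff]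
    rcases eq_or_ne j' j with rfl | hne
    · simp [SimpleGraph.dist_self]
    · rw [SimpleGraph.dist_comm (u := vD j') (v := vC c), dCD,
        dDD hbipB hbipC c₀ hne]
      simp [hne]
  rw [eA, eB, eC, eD, ncard_univ', Fintype.card_fin, Set.ncard_singleton,
    ncard_compl, Set.ncard_singleton, Fintype.card_fin]

private lemma card_Wdc (i₀ : Fin m) (hbc₀ : G.Adj (.inl b₀) (.inr c₀)) (c : γ) (j : Fin k) :
    (wSet (Hmgk G m k) (vD j) (vC c)).ncard
      = (Fintype.card β - {b' : β | G.Adj (.inl b') (.inr c)}.ncard)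
        + (Fintype.card γ - 1) + 1 := by
  rw [ncard_V]
  have eA : {i' : Fin m | vA i' ∈ wSet (Hmgk G m k) (vD j) (vC c)} = ∅ := by
    ext i'
    simp only [wSet, Set.mem_setOf_eq, Set.mem_empty_iff_false, iff_false, not_lt]
    rw [dAC hbipB hbipC hc, dAD hbipB hbipC hbc₀]
    omega
  have eB : {b' : β | vB b' ∈ wSet (Hmgk G m k) (vD j) (vC c)}
      = {b' : β | G.Adj (.inl b') (.inr c)}ᶜ := by
    ext b'
    simp only [wSet, Set.mem_setOf_eq, Set.mem_compl_iff]
    rw [dBD hbipB hbipC hb]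
    by_cases hadj' : G.Adj (.inl b') (.inr c)
    · rw [dBCadj hadj']; simp [hadj']
    · rw [dBCnon hbipB hbipC i₀ hc hadj']; simp [hadj']
  have eC : {c' : γ | vC c' ∈ wSet (Hmgk G m k) (vD j) (vC c)} = {c}ᶜ := by
    ext c'
    simp only [wSet, Set.mem_setOf_eq, Set.mem_compl_iff, Set.mem_singleton_iff]
    rcases eq_or_ne c' c with rfl | hne
    · simp [SimpleGraph.dist_self, dCD]
    · rw [dCC hbipB hbipC j hne, dCD]
      simp [hne]
  have eD : {j' : Fin k | vD j' ∈ wSet (Hmgk G m k) (vD j) (vC c)} = {j} := by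
    ext j'
    simp only [wSet, Set.mem_setOf_eq, Set.mem_singleton_iff]
    rcases eq_or_ne j' j with rfl | hne
    · simp [SimpleGraph.dist_self, SimpleGraph.dist_comm (u := vD j') (v := vC c), dCD]
    · rw [SimpleGraph.dist_comm (u := vD j') (v := vC c), dCD,
        dDD hbipB hbipC c₀ hne]
      simp [hne]
  rw [eA, eB, eC, eD, ncard_compl, ncard_compl, Set.ncard_singleton, Set.ncard_singleton,
    Set.ncard_empty]
  omega

end Counts

end Stmt14Aux

/-- `H(m, G, k)` built on a nonempty `(t₁, t₂)`-biregular bipartite graph `G`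
with parts of sizes `n₁ = |β|`, `n₂ = |γ|` is distance-balanced iff
`t₁ = t₂ = n₁ − k = n₂ − m`. -/
theorem stmt14 {β γ : Type*} [Fintype β] [Fintype γ]
    (G : SimpleGraph (β ⊕ γ)) [DecidableRel G.Adj]
    (t₁ t₂ m k : ℕ)
    (hne : G ≠ ⊥)
    (hbipB : ∀ b b' : β, ¬ G.Adj (.inl b) (.inl b'))
    (hbipC : ∀ c c' : γ, ¬ G.Adj (.inr c) (.inr c'))
    (hregB : ∀ b : β, G.degree (.inl b) = t₁)
    (hregC : ∀ c : γ, G.degree (.inr c) = t₂)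
    (hm : 1 ≤ m) (hk : 1 ≤ k)
    (horder : Fintype.card β + m ≤ Fintype.card γ + k) :
    DistBalanced (Hmgk G m k) ↔
      (t₁ = t₂ ∧ (t₁ : ℚ) = (Fintype.card β : ℚ) - k ∧
        (t₁ : ℚ) = (Fintype.card γ : ℚ) - m) := by
  classical
  -- an edge of `G`
  have hex : ∃ b c, G.Adj (.inl b) (.inr c) := by
    by_contra h
    push_neg at h
    apply hne
    ext x y
    simp only [SimpleGraph.bot_adj, iff_false]
    intro hxy
    rcases x with b | c <;> rcases y with b' | c'
    · exact hbipB b b' hxy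
    · exact h b c' hxy
    · exact h b' c hxy.symm
    · exact hbipC c c' hxy
  obtain ⟨b₀, c₀, hbc₀⟩ := hex
  -- neighbourhood cardinalities
  have hnbhdB : ∀ b : β, G.neighborSet (.inl b)
      = Sum.inr '' {c : γ | G.Adj (.inl b) (.inr c)} := by
    intro b
    ext x
    rcases x with b' | c'
    · simp [SimpleGraph.mem_neighborSet, hbipB b b']
    · simp [SimpleGraph.mem_neighborSet]
  have hnbhdC : ∀ c : γ, G.neighborSet (.inr c)
      = Sum.inl '' {b : β | G.Adj (.inl b) (.inr c)} := by
    intro c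
    ext x
    rcases x with b' | c'
    · simp only [SimpleGraph.mem_neighborSet, Set.mem_image, Set.mem_setOf_eq,
        Sum.inl.injEq, exists_eq_right]
      exact ⟨fun h => h.symm, fun h => h.symm⟩
    · simp only [SimpleGraph.mem_neighborSet, Set.mem_image, Set.mem_setOf_eq]
      constructor
      · intro h
        exact absurd h (hbipC c c')
      · rintro ⟨b, hb, hcon⟩
        cases hcon
  have htB : ∀ b : β, {c : γ | G.Adj (.inl b) (.inr c)}.ncard = t₁ := by
    intro b
    have h1 : (G.neighborSet (.inl b)).ncard = t₁ := by
      rw [← hregB b, ← SimpleGraph.card_neighborSet_eq_degree, ← Nat.card_coe_set_eq,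
        Nat.card_eq_fintype_card]
    rw [← h1, hnbhdB b, Set.ncard_image_of_injective _ Sum.inr_injective]
  have htC : ∀ c : γ, {b : β | G.Adj (.inl b) (.inr c)}.ncard = t₂ := by
    intro c
    have h1 : (G.neighborSet (.inr c)).ncard = t₂ := by
      rw [← hregC c, ← SimpleGraph.card_neighborSet_eq_degree, ← Nat.card_coe_set_eq,
        Nat.card_eq_fintype_card]
    rw [← h1, hnbhdC c, Set.ncard_image_of_injective _ Sum.inl_injective]
  have ht1pos : 0 < t₁ := by
    rw [← htB b₀]
    exact (Set.ncard_pos (Set.toFinite _)).2 ⟨c₀, hbc₀⟩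
  have ht2pos : 0 < t₂ := by
    rw [← htC c₀]
    exact (Set.ncard_pos (Set.toFinite _)).2 ⟨b₀, hbc₀⟩
  have hb : ∀ b : β, ∃ c, G.Adj (.inl b) (.inr c) := by
    intro b
    have : 0 < {c : γ | G.Adj (.inl b) (.inr c)}.ncard := by rw [htB b]; exact ht1pos
    obtain ⟨c, hc⟩ := (Set.ncard_pos (Set.toFinite _)).1 this
    exact ⟨c, hc⟩
  have hc : ∀ c : γ, ∃ b, G.Adj (.inl b) (.inr c) := by
    intro c
    have : 0 < {b : β | G.Adj (.inl b) (.inr c)}.ncard := by rw [htC c]; exact ht2pos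
    obtain ⟨b, hbx⟩ := (Set.ncard_pos (Set.toFinite _)).1 this
    exact ⟨b, hbx⟩
  have ht1le : t₁ ≤ Fintype.card γ := by
    rw [← htB b₀, ← ncard_univ']
    exact Set.ncard_le_ncard (Set.subset_univ _) (Set.toFinite _)
  have ht2le : t₂ ≤ Fintype.card β := by
    rw [← htC c₀, ← ncard_univ']
    exact Set.ncard_le_ncard (Set.subset_univ _) (Set.toFinite _)
  set i₀ : Fin m := ⟨0, hm⟩
  set j₀ : Fin k := ⟨0, hk⟩
  constructor
  · intro hDB
    have E1 := hDB (vA i₀) (vB b₀) trivial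
    rw [card_Wab hbipB hbipC hb hc hbc₀, card_Wba hbipB hbipC hb hc hbc₀, htB b₀] at E1
    have E2 := hDB (vB b₀) (vC c₀) hbc₀
    rw [card_Wbc hbipB hbipC hb hc i₀ j₀ hbc₀, card_Wcb hbipB hbipC hb hc i₀ j₀ hbc₀,
      htB b₀, htC c₀] at E2
    have E3 := hDB (vC c₀) (vD j₀) trivial
    rw [card_Wcd hbipB hbipC hb hc i₀ hbc₀, card_Wdc hbipB hbipC hb hc i₀ hbc₀, htC c₀] at E3
    have hn1pos : 0 < Fintype.card β := Fintype.card_pos_iff.2 ⟨b₀⟩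
    have hn2pos : 0 < Fintype.card γ := Fintype.card_pos_iff.2 ⟨c₀⟩
    have key : t₁ = t₂ ∧ Fintype.card β = k + t₁ ∧ Fintype.card γ = m + t₁ := by
      omega
    obtain ⟨k1, k2, k3⟩ := key
    refine ⟨k1, ?_, ?_⟩
    · rw [k2]; push_cast; ring
    · rw [k3]; push_cast; ring
  · rintro ⟨ht, h1, h2⟩
    have hβ : Fintype.card β = k + t₁ := by
      have : (Fintype.card β : ℚ) = ((k + t₁ : ℕ) : ℚ) := by push_cast; linarith
      exact_mod_cast this
    have hγ : Fintype.card γ = m + t₁ := by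
      have : (Fintype.card γ : ℚ) = ((m + t₁ : ℕ) : ℚ) := by push_cast; linarith
      exact_mod_cast this
    intro u v huv
    rcases u with i | ((b | c) | j) <;> rcases v with i' | ((b' | c') | j')
    · exact (huv : False).elim
    · rw [card_Wab hbipB hbipC hb hc hbc₀, card_Wba hbipB hbipC hb hc hbc₀, htB b']
      omega
    · exact (huv : False).elim
    · exact (huv : False).elim
    · rw [card_Wba hbipB hbipC hb hc hbc₀, card_Wab hbipB hbipC hb hc hbc₀, htB b]
      omega
    · exact absurd (huv : G.Adj _ _) (hbipB _ _)
    · rw [card_Wbc hbipB hbipC hb hc i₀ j₀ (huv : G.Adj _ _),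
        card_Wcb hbipB hbipC hb hc i₀ j₀ (huv : G.Adj _ _), htB b, htC c']
      omega
    · exact (huv : False).elim
    · exact (huv : False).elim
    · rw [card_Wcb hbipB hbipC hb hc i₀ j₀ ((huv : G.Adj _ _).symm),
        card_Wbc hbipB hbipC hb hc i₀ j₀ ((huv : G.Adj _ _).symm), htB b', htC c]
      omega
    · exact absurd (huv : G.Adj _ _) (hbipC _ _)
    · rw [card_Wcd hbipB hbipC hb hc i₀ hbc₀, card_Wdc hbipB hbipC hb hc i₀ hbc₀, htC c]
      omega
    · exact (huv : False).elim
    · exact (huv : False).elim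
    · rw [card_Wdc hbipB hbipC hb hc i₀ hbc₀, card_Wcd hbipB hbipC hb hc i₀ hbc₀, htC c']
      omega
    · exact (huv : False).elim
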